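/- Let G₂(q) = -1/24 + Σ_{n≥1} (Σ_{d|n} d) qⁿ be the weight-2 Eisenstein series (as a formal power series). Then the logarithmic-derivative identity holds: q·d/dq of ∏_{n≥1}(1-qⁿ)^{-24} equals (1 + 24·G₂(q)) · ∏_{n≥1}(1-qⁿ)^{-24}. -/

import Mathlib

open PowerSeries Finset

noncomputable section

/-- The operator `q·d/dq` on formal power series: sends `Σ aₙ qⁿ` to `Σ n·aₙ qⁿ`. -/
def qd (f : PowerSeries ℚ) : PowerSeries ℚ :=
  PowerSeries.mk fun n => (n : ℚ) * PowerSeries.coeff n f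

/-- The weight-2 Eisenstein series `G₂(q) = -1/24 + Σ_{n≥1} σ₁(n) qⁿ`. -/
def G2 : PowerSeries ℚ :=
  PowerSeries.mk fun n => if n = 0 then -(1 / 24) else ∑ d ∈ n.divisors, (d : ℚ)

namespace QdAux

lemma coeff_qd (f : PowerSeries ℚ) (n : ℕ) :
    PowerSeries.coeff n (qd f) = (n : ℚ) * PowerSeries.coeff n f := by
  simp [qd]

lemma qd_eq (f : PowerSeries ℚ) : qd f = X * (PowerSeries.derivative ℚ f) := by
  ext n
  cases n with
  | zero => simp [coeff_qd]
  | succ n =>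
    rw [coeff_qd, PowerSeries.coeff_succ_X_mul, PowerSeries.coeff_derivative]
    push_cast
    ring

lemma qd_mul (f g : PowerSeries ℚ) : qd (f * g) = qd f * g + f * qd g := by
  simp only [qd_eq, Derivation.leibniz, smul_eq_mul, mul_add]
  ring

lemma qd_one : qd (1 : PowerSeries ℚ) = 0 := by
  simp [qd_eq]

lemma qd_sub (f g : PowerSeries ℚ) : qd (f - g) = qd f - qd g := by
  ext m
  simp [coeff_qd, mul_sub]

/-- Geometric-type series `Xᵏ/(1-Xᵏ) = Σ_{j≥1} X^{jk}`. -/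
def g (k : ℕ) : PowerSeries ℚ :=
  PowerSeries.mk fun m => if k ∣ m ∧ 0 < m then 1 else 0

lemma g_spec (k : ℕ) (hk : 0 < k) : g k * (1 - X ^ k) = X ^ k := by
  ext m
  rw [mul_sub, mul_one, map_sub, PowerSeries.coeff_mul_X_pow', PowerSeries.coeff_X_pow]
  simp only [g, coeff_mk]
  rcases lt_trichotomy m k with h | h | h
  · have hd : ¬(k ∣ m ∧ 0 < m) := fun ⟨h1, h2⟩ => absurd (Nat.le_of_dvd h2 h1) (by omega)
    rw [if_neg hd, if_neg (by omega : ¬ k ≤ m), if_neg (by omega : ¬ m = k)]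
    ring
  · subst h
    rw [if_pos ⟨dvd_rfl, hk⟩, if_pos le_rfl, Nat.sub_self, if_neg (by simp), if_pos rfl]
    ring
  · rw [if_pos (by omega : k ≤ m), if_neg (by omega : ¬ m = k)]
    by_cases hdvd : k ∣ m
    · rw [if_pos ⟨hdvd, by omega⟩, if_pos ⟨Nat.dvd_sub hdvd dvd_rfl, by omega⟩]
      ring
    · have h1 : ¬ k ∣ m - k := fun hc => hdvd (by
        have := Nat.dvd_add hc (dvd_refl k)
        rwa [Nat.sub_add_cancel (le_of_lt h)] at this)
      rw [if_neg (fun hh => hdvd hh.1), if_neg (fun hh => h1 hh.1)]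
      ring

/-- partial product -/
def P (N : ℕ) : PowerSeries ℚ := ∏ n ∈ range N, ((1 : PowerSeries ℚ) - X ^ (n + 1)) ^ 24

/-- partial logarithmic-derivative sum -/
def S (N : ℕ) : PowerSeries ℚ :=
  ∑ n ∈ range N, PowerSeries.C (24 * (n + 1) : ℚ) * g (n + 1)

lemma qd_pow (f : PowerSeries ℚ) (n : ℕ) :
    qd (f ^ n) = n • (f ^ (n - 1) * qd f) := by
  rw [qd_eq, Derivation.leibniz_pow, qd_eq]
  simp only [smul_eq_mul, nsmul_eq_mul]
  ring

lemma qd_one_sub_X_pow (k : ℕ) : qd (1 - X ^ k) = -(PowerSeries.C (k : ℚ)) * X ^ k := by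
  ext m
  rw [coeff_qd, map_sub, neg_mul, map_neg, PowerSeries.coeff_C_mul,
    PowerSeries.coeff_one, PowerSeries.coeff_X_pow]
  by_cases hm : m = k
  · subst hm
    by_cases h0 : m = 0 <;> simp [h0]
  · simp only [if_neg hm, mul_zero, neg_zero]
    by_cases h0 : m = 0 <;> simp [h0]

lemma C24 : (24 : PowerSeries ℚ) = PowerSeries.C 24 :=
  (map_ofNat (PowerSeries.C) 24).symm

lemma qd_factor (k : ℕ) (hk : 0 < k) :
    qd (((1 : PowerSeries ℚ) - X ^ k) ^ 24) =
      -(PowerSeries.C (24 * k : ℚ) * g k) * ((1 - X ^ k) ^ 24) := by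
  rw [qd_pow, qd_one_sub_X_pow, nsmul_eq_mul]
  set A := (1 : PowerSeries ℚ) - X ^ k with hA
  rw [← g_spec k hk, ← hA]
  have h1 : A ^ 24 = A ^ (24 - 1) * A := by
    rw [← pow_succ]
  rw [h1]
  have h2 : ((24 : ℕ) : PowerSeries ℚ) = PowerSeries.C 24 := by
    rw [Nat.cast_ofNat, C24]
  have h3 : PowerSeries.C (24 * (k : ℚ)) = PowerSeries.C 24 * PowerSeries.C (k : ℚ) := by
    rw [← map_mul]
  rw [h2, h3]
  ring

lemma qd_P (N : ℕ) : qd (P N) = -(S N) * P N := by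
  induction N with
  | zero => simp [P, S, qd_one]
  | succ N ih =>
    have hstep : P (N + 1) = P N * ((1 : PowerSeries ℚ) - X ^ (N + 1)) ^ 24 := by
      simp only [P, prod_range_succ]
    have hS : S (N + 1) = S N + PowerSeries.C (24 * ((N : ℚ) + 1)) * g (N + 1) := by
      simp only [S, sum_range_succ]
    rw [hstep, qd_mul, ih, qd_factor (N + 1) (Nat.succ_pos N), hS]
    set B := ((1 : PowerSeries ℚ) - X ^ (N + 1)) ^ 24 with hB
    push_cast
    ring

/-- `Σ σ₁(n) qⁿ` -/
def E : PowerSeries ℚ :=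
  PowerSeries.mk fun m => if m = 0 then 0 else ∑ d ∈ m.divisors, (d : ℚ)

lemma one_add_G2 : (1 : PowerSeries ℚ) + 24 * G2 = PowerSeries.C 24 * E := by
  ext m
  rw [map_add, PowerSeries.coeff_one, C24, PowerSeries.coeff_C_mul, PowerSeries.coeff_C_mul]
  by_cases h0 : m = 0
  · subst h0
    simp [G2, E]
    try norm_num
  · simp [G2, E, h0]

lemma dvd_E_sub_S (N : ℕ) : (X : PowerSeries ℚ) ^ (N + 1) ∣ PowerSeries.C 24 * E - S N := by
  rw [PowerSeries.X_pow_dvd_iff]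
  intro m hm
  rw [map_sub, PowerSeries.coeff_C_mul, S, map_sum]
  simp only [PowerSeries.coeff_C_mul, g, coeff_mk, mul_ite, mul_one, mul_zero]
  by_cases h0 : m = 0
  · subst h0
    simp [E]
  · have hmN : m ≤ N := by omega
    have hps : 0 < m := Nat.pos_of_ne_zero h0
    rw [show (∑ n ∈ range N, if (n + 1) ∣ m ∧ 0 < m then (24 * ((n : ℚ) + 1)) else 0)
        = ∑ n ∈ range N, if (n + 1) ∣ m then (24 * ((n : ℚ) + 1)) else 0 from by
      refine sum_congr rfl fun n _ => ?_
      congr 1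
      simp [hps]]
    have hreindex : (∑ k ∈ Finset.Ico 1 (N + 1), if k ∣ m then (24 * (k : ℚ)) else 0)
        = ∑ n ∈ range N, if (n + 1) ∣ m then (24 * ((n : ℚ) + 1)) else 0 := by
      rw [Finset.sum_Ico_eq_sum_range]
      simp only [Nat.add_sub_cancel]
      refine sum_congr rfl fun n _ => ?_
      rw [Nat.add_comm 1 n]
      push_cast
      ring_nf
    rw [← hreindex, ← Finset.sum_filter]
    have hfilt : Finset.filter (· ∣ m) (Finset.Ico 1 (N + 1)) = m.divisors := by
      ext d
      simp only [Finset.mem_filter, Finset.mem_Ico, Nat.mem_divisors]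
      constructor
      · rintro ⟨⟨h1, h2⟩, h3⟩; exact ⟨h3, h0⟩
      · rintro ⟨h1, _⟩
        have hd0 : d ≠ 0 := by rintro rfl; exact h0 (Nat.zero_dvd.mp h1)
        exact ⟨⟨Nat.one_le_iff_ne_zero.mpr hd0,
          by have := Nat.le_of_dvd hps h1; omega⟩, h1⟩
    rw [hfilt, E, coeff_mk, if_neg h0, Finset.mul_sum]
    exact sub_self _

lemma qd_dvd {n : ℕ} {f : PowerSeries ℚ} (h : (X : PowerSeries ℚ) ^ n ∣ f) :
    (X : PowerSeries ℚ) ^ n ∣ qd f := by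
  rw [PowerSeries.X_pow_dvd_iff] at h ⊢
  intro m hm
  rw [coeff_qd, h m hm, mul_zero]

end QdAux

open QdAux in
/-- If `Φ = ∏_{n≥1}(1-qⁿ)^{-24}` (characterized by the property that `Φ` times the partial
product `∏_{n=1}^{N}(1-qⁿ)^{24}` agrees with `1` up to order `q^N`), then
`q·d/dq Φ = (1 + 24·G₂(q))·Φ`. -/
theorem qd_eta_inv_24
    (Φ : PowerSeries ℚ)
    (hΦ : ∀ N : ℕ,
      trunc (N + 1) (Φ * ∏ n ∈ range N, ((1 : PowerSeries ℚ) - X ^ (n + 1)) ^ 24) = 1) :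
    qd Φ = (1 + 24 * G2) * Φ := by
  rw [one_add_G2]
  set D : PowerSeries ℚ := qd Φ - PowerSeries.C 24 * E * Φ with hD
  suffices hzero : D = 0 by
    have h := sub_eq_zero.mp hzero
    exact h
  have key : ∀ N : ℕ, (X : PowerSeries ℚ) ^ (N + 1) ∣ D := by
    intro N
    have h1 : (X : PowerSeries ℚ) ^ (N + 1) ∣ Φ * P N - 1 := by
      rw [PowerSeries.X_pow_dvd_iff]
      intro m hm
      have h := congrArg (fun p => Polynomial.coeff p m) (hΦ N)
      simp only [PowerSeries.coeff_trunc, if_pos hm, Polynomial.coeff_one] at h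
      rw [map_sub, PowerSeries.coeff_one, P, h]
      simp
    have h2 := qd_dvd h1
    rw [qd_sub, qd_one, sub_zero, qd_mul, qd_P] at h2
    have h3 : (X : PowerSeries ℚ) ^ (N + 1) ∣ (Φ * P N) * (PowerSeries.C 24 * E - S N) :=
      Dvd.dvd.mul_left (dvd_E_sub_S N) _
    have h4 : D * P N = (qd Φ * P N + Φ * (-(S N) * P N))
        - (Φ * P N) * (PowerSeries.C 24 * E - S N) := by
      rw [hD]; ring
    have h5 : (X : PowerSeries ℚ) ^ (N + 1) ∣ D * P N := by
      rw [h4]; exact dvd_sub h2 h3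
    have hu : IsUnit (P N) := by
      rw [PowerSeries.isUnit_iff_constantCoeff]
      have hc : PowerSeries.constantCoeff (P N) = 1 := by
        rw [P, map_prod]
        refine Finset.prod_eq_one fun n _ => ?_
        rw [map_pow, map_sub, map_one, map_pow, PowerSeries.constantCoeff_X]
        norm_num
      rw [hc]; exact isUnit_one
    obtain ⟨u, hu⟩ := hu
    have h6 := h5.mul_right (↑u⁻¹ : PowerSeries ℚ)
    rwa [← hu, mul_assoc, Units.mul_inv, mul_one] at h6
  ext m
  rw [map_zero]
  exact PowerSeries.X_pow_dvd_iff.mp (key m) m (Nat.lt_succ_self m)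

end
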